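/- arXiv:0805.3518 — 4 statements merged into one kernel-verified Lean document; each statement's English description precedes it below -/
import Mathlib

section
/- For any SOLP program P, FP(A(P̂)) = AFP(P): the classical fixpoints of the traditional program obtained from P by first rewriting tolerance rules (the hat operator) and then removing all social conditions coincide exactly with the autonomous fixpoints of P. -/
namespace SOLP

/-- Literals: an atom or its negation-as-failure (NAF). -/
inductive Lit (α : Type) where
  | pos (a : α)
  | neg (a : α)

/-- The atom of a literal. -/
def Lit.atom {α : Type} : Lit α → α
  | .pos a => a
  | .neg a => a

/-- Classical truth of a literal w.r.t. an interpretation. -/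
def Lit.holds {α : Type} (I : Set α) : Lit α → Prop
  | .pos a => a ∈ I
  | .neg a => a ∉ I

/-- Renaming of literals. -/
def Lit.map {α β : Type} (f : α → β) : Lit α → Lit β
  | .pos a => .pos (f a)
  | .neg a => .neg (f a)

/-- Selection condition of a social condition: either a member selection `[P_k]`
naming one program, or a cardinal selection `[l,h]`. -/
inductive Cond (n : ℕ) where
  | member (k : Fin n)
  | card (l h : ℕ)

/-- Social conditions (SCs): a selection condition, a content (set of literals)
and a skeleton (set of nested SCs). -/
inductive SC (α : Type) (n : ℕ) where
  | mk (cond : Cond n) (content : List (Lit α)) (skel : List (SC α n))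

/-- Occurrence of an atom in a social condition. -/
inductive SC.HasAtom {α : Type} {n : ℕ} (a : α) : SC α n → Prop where
  | content {c : Cond n} {cont : List (Lit α)} {skel : List (SC α n)} {b : Lit α}
      (hb : b ∈ cont) (h : b.atom = a) : SC.HasAtom a (.mk c cont skel)
  | skel {c : Cond n} {cont : List (Lit α)} {skel : List (SC α n)} {s' : SC α n}
      (hs : s' ∈ skel) (h : SC.HasAtom a s') : SC.HasAtom a (.mk c cont skel)

/-- Well-formed social conditions: either simple (empty skeleton), or a cardinal
SC all of whose nested SCs are either well-formed cardinal SCs with `h' ≤ h`, or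
simple member SCs. -/
inductive SC.WF {α : Type} {n : ℕ} : SC α n → Prop where
  | simple (c : Cond n) (content : List (Lit α)) : SC.WF (.mk c content [])
  | card (l h : ℕ) (content : List (Lit α)) (skel : List (SC α n))
      (hshape : ∀ s' ∈ skel,
        (∃ (l' h' : ℕ) (c' : List (Lit α)) (sk' : List (SC α n)),
            s' = SC.mk (.card l' h') c' sk' ∧ h' ≤ h) ∨
        (∃ (k : Fin n) (c' : List (Lit α)), s' = SC.mk (.member k) c' []))
      (hwf : ∀ s' ∈ skel, ∀ (l' h' : ℕ) (c' : List (Lit α)) (sk' : List (SC α n)),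
          s' = SC.mk (.card l' h') c' sk' → SC.WF s') :
      SC.WF (.mk (.card l h) content skel)

/-- A social rule: head atom (marked as a tolerance rule if the real head is
`okay(head)`), a body of literals, and a list of SCs, each marked positive
(`true`) or NAF (`false`). -/
structure SRule (α : Type) (n : ℕ) where
  head : α
  isOkay : Bool
  lits : List (Lit α)
  scs : List (SC α n × Bool)

/-- A SOLP program. -/
abbrev SProgram (α : Type) (n : ℕ) := Set (SRule α n)

/-- `okay(p) ← body` becomes `p ← p, body`; other rules are unchanged. -/
def hatP {α : Type} {n : ℕ} (P : SProgram α n) : SProgram α n :=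
  {r ∈ P | r.isOkay = false} ∪
    (fun r : SRule α n => ⟨r.head, false, .pos r.head :: r.lits, r.scs⟩) ''
      {r ∈ P | r.isOkay = true}

/-- The autonomous reduction: remove all social conditions. -/
def AP {α : Type} {n : ℕ} (P : SProgram α n) : SProgram α n :=
  (fun r : SRule α n => ⟨r.head, r.isOkay, r.lits, []⟩) '' P

/-- The atoms occurring in a SOLP program. -/
def SVar {α : Type} {n : ℕ} (P : SProgram α n) : Set α :=
  {a | ∃ r ∈ P, r.head = a ∨ (∃ b ∈ r.lits, Lit.atom b = a) ∨
        (∃ p ∈ r.scs, SC.HasAtom a p.1)}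

/-- Truth of a list of literals w.r.t. an interpretation. -/
def litsTrue {α : Type} (I : Set α) (L : List (Lit α)) : Prop := ∀ b ∈ L, b.holds I

/-- The autonomous immediate consequence operator `AT_P`. -/
def ATP {α : Type} {n : ℕ} (P : SProgram α n) (I : Set α) : Set α :=
  {a | ∃ r ∈ AP P, r.isOkay = false ∧ r.head = a ∧ litsTrue I r.lits} ∪
  {a | ∃ r ∈ AP P, r.isOkay = true ∧ r.head = a ∧ a ∈ I ∧ litsTrue I r.lits}

/-- Autonomous fixpoints of a SOLP program. -/
def AFP {α : Type} {n : ℕ} (P : SProgram α n) : Set (Set α) :=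
  {I | I ⊆ SVar (AP P) ∧ ATP P I = I}

/-- Social interpretations: sets of labelled atoms `a_{P_i}`. -/
abbrev SInterp (α : Type) (n : ℕ) := Set (Fin n × α)

/-- Truth of a literal for program `p` w.r.t. a social interpretation. -/
def Lit.trueFor {α : Type} {n : ℕ} (I : SInterp α n) (p : Fin n) : Lit α → Prop
  | .pos a => (p, a) ∈ I
  | .neg a => (p, a) ∉ I

/-- Truth of an SC of `P_j` in a sub-collection `C'` w.r.t. a social interpretation. -/
inductive SC.TrueIn {α : Type} {n : ℕ} (I : SInterp α n) (j : Fin n) :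
    Set (Fin n) → SC α n → Prop where
  | member {C' : Set (Fin n)} {k : Fin n} {content : List (Lit α)} {skel : List (SC α n)}
      (hk : k ∈ C') (hc : ∀ b ∈ content, Lit.trueFor I k b) :
      SC.TrueIn I j C' (.mk (.member k) content skel)
  | card {C' : Set (Fin n)} {l h : ℕ} {content : List (Lit α)} {skel : List (SC α n)}
      (D : Finset (Fin n)) (hD : ∀ p ∈ D, p ∈ C' ∧ p ≠ j)
      (hl : l ≤ D.card) (hh : D.card ≤ h)
      (hc : ∀ b ∈ content, ∀ p ∈ D, Lit.trueFor I p b)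
      (D' : ∀ s' ∈ skel, Finset (Fin n))
      (hsub : ∀ (s' : SC α n) (hs' : s' ∈ skel), D' s' hs' ⊆ D)
      (hs : ∀ (s' : SC α n) (hs' : s' ∈ skel), SC.TrueIn I j ↑(D' s' hs') s') :
      SC.TrueIn I j C' (.mk (.card l h) content skel)

/-- `s` is true for `P_j` w.r.t. `Ī` (in the whole collection). -/
def SC.TrueFor {α : Type} {n : ℕ} (I : SInterp α n) (j : Fin n) (s : SC α n) : Prop :=
  SC.TrueIn I j Set.univ s

/-- Truth of the body of a social rule of `P_j` w.r.t. a social interpretation. -/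
def SRule.bodyTrue {α : Type} {n : ℕ} (I : SInterp α n) (j : Fin n) (r : SRule α n) : Prop :=
  (∀ b ∈ r.lits, Lit.trueFor I j b) ∧
  (∀ p ∈ r.scs, (p.2 = true → SC.TrueFor I j p.1) ∧ (p.2 = false → ¬ SC.TrueFor I j p.1))

/-- The social immediate consequence operator `ST_C`. -/
def STC {α : Type} {n : ℕ} (C : Fin n → SProgram α n) (I : SInterp α n) : SInterp α n :=
  {x | ∃ r ∈ C x.1, r.isOkay = false ∧ r.head = x.2 ∧ SRule.bodyTrue I x.1 r} ∪
  {x | ∃ r ∈ C x.1, r.isOkay = true ∧ r.head = x.2 ∧ x ∈ I ∧ SRule.bodyTrue I x.1 r}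

/-- The labelled version `(L)_{P_i}` of a set of atoms. -/
def labelled {α : Type} {n : ℕ} (i : Fin n) (L : Set α) : SInterp α n :=
  {x | x.1 = i ∧ x.2 ∈ L}

/-- Candidate social interpretations: combinations of autonomous fixpoints. -/
def Candidate {α : Type} {n : ℕ} (C : Fin n → SProgram α n) (I : SInterp α n) : Prop :=
  ∃ F : Fin n → Set α, (∀ i, F i ∈ AFP (C i)) ∧ I = ⋃ i, labelled i (F i)

/-- The Social Semantics: the set of social models. -/
def SOS {α : Type} {n : ℕ} (C : Fin n → SProgram α n) : Set (SInterp α n) :=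
  {I | Candidate C I ∧ STC C I = I}

/-! ### Traditional (normal) logic programs -/

/-- A normal logic-program rule. -/
structure NRule (γ : Type) where
  head : γ
  body : List (Lit γ)

abbrev NProgram (γ : Type) := Set (NRule γ)

/-- The atoms occurring in a normal program. -/
def NVar {γ : Type} (P : NProgram γ) : Set γ :=
  {a | ∃ r ∈ P, r.head = a ∨ ∃ b ∈ r.body, Lit.atom b = a}

/-- The immediate consequence operator `T_P`. -/
def TN {γ : Type} (P : NProgram γ) (I : Set γ) : Set γ :=
  {a | ∃ r ∈ P, r.head = a ∧ ∀ b ∈ r.body, b.holds I}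

/-- Fixpoints of a traditional program. -/
def NFP {γ : Type} (P : NProgram γ) : Set (Set γ) :=
  {I | I ⊆ NVar P ∧ TN P I = I}

/-- Keep a positive literal, drop a negative one. -/
def Lit.posOnly {γ : Type} : Lit γ → Option (Lit γ)
  | .pos a => some (.pos a)
  | .neg _ => none

/-- The Gelfond–Lifschitz reduct `P^M`. -/
def GLReduct {γ : Type} (P : NProgram γ) (M : Set γ) : NProgram γ :=
  {r | ∃ r' ∈ P, (∀ c : γ, Lit.neg c ∈ r'.body → c ∉ M) ∧
        r = ⟨r'.head, r'.body.filterMap Lit.posOnly⟩}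

/-- The least model of a (positive) program, as the intersection of all sets
closed under its rules. -/
def LeastModel {γ : Type} (P : NProgram γ) : Set γ :=
  ⋂₀ {I | ∀ r ∈ P, (∀ a : γ, Lit.pos a ∈ r.body → a ∈ I) → r.head ∈ I}

/-- Stable models (Gelfond–Lifschitz) of a normal program. -/
def SMN {γ : Type} (P : NProgram γ) : Set (Set γ) :=
  {M | M = LeastModel (GLReduct P M)}

/-! ### The translation vocabulary -/

/-- Atoms of the translated programs: `a_P`, `a'_P`, `sa_P`, `fail_P`, `ρ(s)_P`
and the `g(s)(k)_P` predicates. -/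
inductive GAtom (α : Type) (n : ℕ) where
  | atm (a : α)
  | prim (a : α)
  | sup (a : α)
  | fail
  | rho (s : SC α n)
  | g (s : SC α n) (k : Fin n)

/-- The guessing rules `S_1` over a vocabulary `V`. -/
def GammaS1 {α : Type} {n : ℕ} (V : Set α) : NProgram (GAtom α n) :=
  {r | ∃ a ∈ V, r = ⟨GAtom.atm a, [Lit.neg (GAtom.prim a)]⟩ ∨
                r = ⟨GAtom.prim a, [Lit.neg (GAtom.atm a)]⟩}

/-- The checking rules `S_3` over a vocabulary `V`. -/
def GammaS3 {α : Type} {n : ℕ} (V : Set α) : NProgram (GAtom α n) :=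
  {r | ∃ a ∈ V,
      r = ⟨GAtom.fail, [Lit.neg GAtom.fail, Lit.pos (GAtom.sup a), Lit.neg (GAtom.atm a)]⟩ ∨
      r = ⟨GAtom.fail, [Lit.neg GAtom.fail, Lit.pos (GAtom.atm a), Lit.neg (GAtom.sup a)]⟩}

/-- The transformation `Γ` of Buccafurri–Gottlob, for traditional programs. -/
def Gamma {α : Type} {n : ℕ} (P : NProgram α) : NProgram (GAtom α n) :=
  GammaS1 (NVar P) ∪
  {r | ∃ r' ∈ P, r = ⟨GAtom.sup r'.head, r'.body.map (Lit.map GAtom.atm)⟩} ∪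
  GammaS3 (NVar P)

/-- The translated body of a social rule: labelled literals followed by the
`ρ`-literals corresponding to its (possibly NAF'd) SCs. -/
def SRule.transBody {α : Type} {n : ℕ} (r : SRule α n) : List (Lit (GAtom α n)) :=
  r.lits.map (Lit.map GAtom.atm) ++
    r.scs.map (fun p => if p.2 then Lit.pos (GAtom.rho p.1) else Lit.neg (GAtom.rho p.1))

/-- The extended transformation `Γ'` for SOLP programs. -/
def Gamma' {α : Type} {n : ℕ} (Q : SProgram α n) : NProgram (GAtom α n) :=
  GammaS1 (SVar (AP (hatP Q))) ∪
  {r | ∃ r' ∈ Q, r = ⟨GAtom.sup r'.head, SRule.transBody r'⟩} ∪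
  GammaS3 (SVar (AP (hatP Q)))

/-- Forget the SCs (and okay-marking) of a social rule, yielding a traditional rule. -/
def SRule.toN {α : Type} {n : ℕ} (r : SRule α n) : NRule α := ⟨r.head, r.lits⟩

/-- View an SC-free SOLP program as a traditional program. -/
def toTrad {α : Type} {n : ℕ} (P : SProgram α n) : NProgram α := SRule.toN '' P

/-- The encoding `[M]_P` of an interpretation of a SOLP program `P`. -/
def encode {α : Type} {n : ℕ} (P : SProgram α n) (M : Set α) : Set (GAtom α n) :=
  (GAtom.atm '' M) ∪ (GAtom.prim '' (SVar (AP (hatP P)) \ M)) ∪ (GAtom.sup '' M)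

/-- The encoding `[M]_P` of an interpretation of a traditional program `P`. -/
def encodeN {α : Type} (n : ℕ) (P : NProgram α) (M : Set α) : Set (GAtom α n) :=
  (GAtom.atm '' M) ∪ (GAtom.prim '' (NVar P \ M)) ∪ (GAtom.sup '' M)

/-- Renaming of rules. -/
def NRule.map {γ δ : Type} (f : γ → δ) (r : NRule γ) : NRule δ :=
  ⟨f r.head, r.body.map (Lit.map f)⟩

/-- Labelling of a whole program w.r.t. `P_i`. -/
def labProg {γ : Type} {n : ℕ} (i : Fin n) (P : NProgram γ) : NProgram (Fin n × γ) :=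
  (NRule.map (fun a => (i, a))) '' P

/-! ### Aggregate programs -/

/-- A `#count` aggregate `l ≤ #count{K : atomOf K, cond K} ≤ h`. -/
structure CountAgg (γ : Type) (κ : Type) where
  l : ℕ
  h : ℕ
  atomOf : κ → γ
  cond : κ → Prop

/-- Truth of a count aggregate w.r.t. an interpretation. -/
def CountAgg.holds {γ κ : Type} (M : Set γ) (c : CountAgg γ κ) : Prop :=
  c.l ≤ Set.ncard {K | c.cond K ∧ c.atomOf K ∈ M} ∧
  Set.ncard {K | c.cond K ∧ c.atomOf K ∈ M} ≤ c.h

/-- A rule of a logic program with count aggregates. -/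
structure ARule (γ : Type) (κ : Type) where
  head : γ
  body : List (Lit γ)
  aggs : List (CountAgg γ κ)

abbrev AProgram (γ : Type) (κ : Type) := Set (ARule γ κ)

/-- Truth of the body of an aggregate rule. -/
def ARule.bodyHolds {γ κ : Type} (M : Set γ) (r : ARule γ κ) : Prop :=
  (∀ b ∈ r.body, b.holds M) ∧ (∀ c ∈ r.aggs, c.holds M)

/-- `M` is a (classical) model of an aggregate program. -/
def AModel {γ κ : Type} (P : AProgram γ κ) (M : Set γ) : Prop :=
  ∀ r ∈ P, r.bodyHolds M → r.head ∈ M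

/-- Stable (answer-set) semantics for aggregate programs: `M` is a minimal model
of the reduct consisting of the rules whose bodies are true w.r.t. `M`. -/
def AStable {γ κ : Type} (P : AProgram γ κ) (M : Set γ) : Prop :=
  AModel P M ∧
  ∀ N : Set γ, N ⊆ M → (∀ r ∈ P, r.bodyHolds M → r.bodyHolds N → r.head ∈ N) → N = M

/-- An aggregate-free rule, seen as an aggregate rule. -/
def NRule.toA {γ : Type} (κ : Type) (r : NRule γ) : ARule γ κ := ⟨r.head, r.body, []⟩

def toAProg {γ : Type} (κ : Type) (P : NProgram γ) : AProgram γ κ := NRule.toA κ '' P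

/-! ### The translation `Ψ` of social conditions -/

/-- Membership of a rule in the translation `Ψ^{P_j}(s)` of a social condition. -/
inductive PsiMem {α : Type} {n : ℕ} (j : Fin n) :
    SC α n → ARule (Fin n × GAtom α n) (Fin n) → Prop where
  | memberGuess (k : Fin n) (content : List (Lit α)) (skel : List (SC α n)) :
      PsiMem j (.mk (.member k) content skel)
        ⟨(j, GAtom.g (.mk (.member k) content skel) k),
          content.map (Lit.map fun a => (k, GAtom.atm a)), []⟩
  | memberCheck (k : Fin n) (content : List (Lit α)) (skel : List (SC α n)) :
      PsiMem j (.mk (.member k) content skel)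
        ⟨(j, GAtom.rho (.mk (.member k) content skel)),
          [Lit.pos (j, GAtom.g (.mk (.member k) content skel) k)], []⟩
  | cardGuess (l h : ℕ) (content : List (Lit α)) (skel : List (SC α n))
      (i : Fin n) (hij : i ≠ j) :
      PsiMem j (.mk (.card l h) content skel)
        ⟨(j, GAtom.g (.mk (.card l h) content skel) i),
          content.map (Lit.map fun a => (i, GAtom.atm a)) ++
            skel.map (fun s' => Lit.pos (j, GAtom.rho s')), []⟩
  | cardCheck (l h : ℕ) (content : List (Lit α)) (skel : List (SC α n)) :
      PsiMem j (.mk (.card l h) content skel)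
        ⟨(j, GAtom.rho (.mk (.card l h) content skel)), [],
          [⟨l, h, fun K => (j, GAtom.g (.mk (.card l h) content skel) K),
            fun K => K ≠ j⟩]⟩
  | nested (l h : ℕ) (content : List (Lit α)) (skel : List (SC α n))
      (s' : SC α n) (hs : s' ∈ skel) (r : ARule (Fin n × GAtom α n) (Fin n))
      (hr : PsiMem j s' r) :
      PsiMem j (.mk (.card l h) content skel) r

/-- The translation `Ψ^{P_j}(s)` of a single social condition. -/
def Psi {α : Type} {n : ℕ} (j : Fin n) (s : SC α n) :
    AProgram (Fin n × GAtom α n) (Fin n) :=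
  {r | PsiMem j s r}

/-- The depth-0 social conditions of a SOLP program. -/
def MSC {α : Type} {n : ℕ} (P : SProgram α n) : Set (SC α n) :=
  {s | ∃ r ∈ P, ∃ b : Bool, (s, b) ∈ r.scs}

/-- The SC translation `C(P_1, ..., P_n)` of a whole SOLP collection. -/
def CTrans {α : Type} {n : ℕ} (C : Fin n → SProgram α n) :
    AProgram (Fin n × GAtom α n) (Fin n) :=
  ⋃ j, ⋃ s ∈ MSC (C j), Psi j s

/-- The program of facts `{a ← : a ∈ Ī}` corresponding to a social interpretation. -/
def factProg {α : Type} {n : ℕ} (I : SInterp α n) :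
    AProgram (Fin n × GAtom α n) (Fin n) :=
  {r | ∃ x ∈ I, r = ⟨(x.1, GAtom.atm x.2), [], []⟩}

/-- The set `SAT^{P_j}_{Ī}(s)` of heads of rules of `Ψ^{P_j}(s)` belonging to
some stable model of `C(P_1,...,P_n) ∪ Q`. -/
def SAT {α : Type} {n : ℕ} (C : Fin n → SProgram α n) (I : SInterp α n)
    (j : Fin n) (s : SC α n) : Set (Fin n × GAtom α n) :=
  {x | (∃ r, PsiMem j s r ∧ r.head = x) ∧
       ∃ M, AStable (CTrans C ∪ factProg I) M ∧ x ∈ M}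

/-! ### COLP programs -/

/-- A COLP rule: a classical rule or an okay-rule, with a body of literals. -/
structure CRule (α : Type) where
  head : α
  isOkay : Bool
  lits : List (Lit α)

abbrev CProgram (α : Type) := Set (CRule α)

/-- The hat operator on COLP programs: `okay(p) ← body` becomes `p ← p, body`. -/
def CRule.hatN {α : Type} (r : CRule α) : NRule α :=
  if r.isOkay then ⟨r.head, .pos r.head :: r.lits⟩ else ⟨r.head, r.lits⟩

def hatC {α : Type} (P : CProgram α) : NProgram α := CRule.hatN '' P

/-- The SOLP translation `σ^n` of a COLP rule. -/
def sigmaRule {α : Type} (n : ℕ) (r : CRule α) : SRule α n :=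
  ⟨r.head, r.isOkay, r.lits, [(SC.mk (.card (n - 1) (n - 1)) [Lit.pos r.head] [], true)]⟩

/-- The SOLP translation `σ^n` of a COLP program. -/
def sigmaP {α : Type} (n : ℕ) (P : CProgram α) : SProgram α n := sigmaRule n '' P

/-- The joint fixpoints `JFP(P_1,...,P_n)` of a collection of COLP programs. -/
def JFP {α : Type} {n : ℕ} (P : Fin n → CProgram α) : Set (Set α) :=
  ⋂ i, NFP (hatC (P i))

end SOLP

open SOLP in
lemma mem_toTrad_AP_hatP {α : Type} {n : ℕ} (P : SProgram α n) (r : NRule α) :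
    r ∈ toTrad (AP (hatP P)) ↔
      (∃ s ∈ P, s.isOkay = false ∧ r = ⟨s.head, s.lits⟩) ∨
      (∃ s ∈ P, s.isOkay = true ∧ r = ⟨s.head, .pos s.head :: s.lits⟩) := by
  simp only [toTrad, AP, hatP, Set.image_union, Set.mem_union, Set.image_image,
    Set.mem_image, Set.mem_setOf_eq, SRule.toN]
  constructor
  · rintro (⟨s, ⟨hs, hok⟩, rfl⟩ | ⟨s, ⟨hs, hok⟩, rfl⟩)
    · exact Or.inl ⟨s, hs, hok, rfl⟩
    · exact Or.inr ⟨s, hs, hok, rfl⟩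
  · rintro (⟨s, hs, hok, rfl⟩ | ⟨s, hs, hok, rfl⟩)
    · exact Or.inl ⟨s, ⟨hs, hok⟩, rfl⟩
    · exact Or.inr ⟨s, ⟨hs, hok⟩, rfl⟩

open SOLP in
lemma mem_AP {α : Type} {n : ℕ} (P : SProgram α n) (r : SRule α n) :
    r ∈ AP P ↔ ∃ s ∈ P, r = ⟨s.head, s.isOkay, s.lits, []⟩ := by
  simp only [AP, Set.mem_image]
  exact ⟨fun ⟨s, hs, h⟩ => ⟨s, hs, h.symm⟩, fun ⟨s, hs, h⟩ => ⟨s, hs, h.symm⟩⟩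

open SOLP in
lemma NVar_eq {α : Type} {n : ℕ} (P : SProgram α n) :
    NVar (toTrad (AP (hatP P))) = SVar (AP P) := by
  ext a
  simp only [NVar, SVar, Set.mem_setOf_eq]
  constructor
  · rintro ⟨r, hr, h⟩
    rcases (mem_toTrad_AP_hatP P r).1 hr with ⟨s, hs, hok, rfl⟩ | ⟨s, hs, hok, rfl⟩
    · refine ⟨⟨s.head, s.isOkay, s.lits, []⟩, (mem_AP P _).2 ⟨s, hs, rfl⟩, ?_⟩
      rcases h with h | ⟨b, hb, hba⟩
      · exact Or.inl h
      · exact Or.inr (Or.inl ⟨b, hb, hba⟩)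
    · refine ⟨⟨s.head, s.isOkay, s.lits, []⟩, (mem_AP P _).2 ⟨s, hs, rfl⟩, ?_⟩
      rcases h with h | ⟨b, hb, hba⟩
      · exact Or.inl h
      · rcases List.mem_cons.1 hb with rfl | hb'
        · exact Or.inl hba
        · exact Or.inr (Or.inl ⟨b, hb', hba⟩)
  · rintro ⟨r, hr, h⟩
    rcases (mem_AP P r).1 hr with ⟨s, hs, rfl⟩
    have h' : s.head = a ∨ ∃ b ∈ s.lits, Lit.atom b = a := by
      rcases h with h | ⟨b, hb, hba⟩ | ⟨p, hp, _⟩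
      · exact Or.inl h
      · exact Or.inr ⟨b, hb, hba⟩
      · simp at hp
    cases hok : s.isOkay
    · refine ⟨⟨s.head, s.lits⟩, (mem_toTrad_AP_hatP P _).2 (Or.inl ⟨s, hs, hok, rfl⟩), ?_⟩
      rcases h' with h' | ⟨b, hb, hba⟩
      · exact Or.inl h'
      · exact Or.inr ⟨b, hb, hba⟩
    · refine ⟨⟨s.head, .pos s.head :: s.lits⟩,
        (mem_toTrad_AP_hatP P _).2 (Or.inr ⟨s, hs, hok, rfl⟩), ?_⟩
      rcases h' with h' | ⟨b, hb, hba⟩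
      · exact Or.inl h'
      · exact Or.inr ⟨b, List.mem_cons_of_mem _ hb, hba⟩

open SOLP in
lemma TN_eq {α : Type} {n : ℕ} (P : SProgram α n) (I : Set α) :
    TN (toTrad (AP (hatP P))) I = ATP P I := by
  ext a
  simp only [TN, ATP, Set.mem_setOf_eq, Set.mem_union]
  constructor
  · rintro ⟨r, hr, rfl, hbody⟩
    rcases (mem_toTrad_AP_hatP P r).1 hr with ⟨s, hs, hok, rfl⟩ | ⟨s, hs, hok, rfl⟩
    · exact Or.inl ⟨_, (mem_AP P _).2 ⟨s, hs, rfl⟩, hok, rfl, hbody⟩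
    · refine Or.inr ⟨_, (mem_AP P _).2 ⟨s, hs, rfl⟩, hok, rfl,
        hbody _ List.mem_cons_self, fun b hb => hbody b (List.mem_cons_of_mem _ hb)⟩
  · rintro (⟨r, hr, hok, rfl, hbody⟩ | ⟨r, hr, hok, rfl, hI, hbody⟩)
    · rcases (mem_AP P r).1 hr with ⟨s, hs, rfl⟩
      exact ⟨⟨s.head, s.lits⟩, (mem_toTrad_AP_hatP P _).2 (Or.inl ⟨s, hs, hok, rfl⟩),
        rfl, hbody⟩
    · rcases (mem_AP P r).1 hr with ⟨s, hs, rfl⟩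
      refine ⟨⟨s.head, .pos s.head :: s.lits⟩,
        (mem_toTrad_AP_hatP P _).2 (Or.inr ⟨s, hs, hok, rfl⟩), rfl, ?_⟩
      rintro b hb
      rcases List.mem_cons.1 hb with rfl | hb'
      · exact hI
      · exact hbody b hb'

open SOLP in
/-- `FP(A(P̂)) = AFP(P)`. -/
theorem fp_a_hat_eq_afp {α : Type} {n : ℕ} (P : SProgram α n) :
    NFP (toTrad (AP (hatP P))) = AFP P := by
  ext I
  simp only [NFP, AFP, Set.mem_setOf_eq, NVar_eq, TN_eq]
end

section
/- For any SOLP program P, the stable models of the translation of its autonomous version are exactly the encodings of its autonomous fixpoints: SM(Γ'(A(P̂))) = ∪_{F ∈ AFP(P)} {[F]_P}. -/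
section Aux
open SOLP

variable {α : Type} {n : ℕ}

lemma mem_AP_hatP {P : SProgram α n} {r : SRule α n} :
    r ∈ AP (hatP P) ↔ ∃ r' ∈ P,
      (r'.isOkay = false ∧ r = ⟨r'.head, false, r'.lits, []⟩) ∨
      (r'.isOkay = true ∧ r = ⟨r'.head, false, Lit.pos r'.head :: r'.lits, []⟩) := by
  constructor
  · rintro ⟨s, hs, rfl⟩
    rcases hs with ⟨hs, hok⟩ | ⟨t, ⟨ht, hok⟩, rfl⟩
    · exact ⟨s, hs, Or.inl ⟨hok, by cases s; simp_all⟩⟩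
    · exact ⟨t, ht, Or.inr ⟨hok, rfl⟩⟩
  · rintro ⟨s, hs, ⟨hok, rfl⟩ | ⟨hok, rfl⟩⟩
    · exact ⟨s, Or.inl ⟨hs, hok⟩, by cases s; simp_all⟩
    · exact ⟨⟨s.head, false, Lit.pos s.head :: s.lits, s.scs⟩,
        Or.inr ⟨s, ⟨hs, hok⟩, rfl⟩, rfl⟩

lemma AP_hatP_shape {P : SProgram α n} {r : SRule α n} (h : r ∈ AP (hatP P)) :
    r.isOkay = false ∧ r.scs = [] := by
  rcases mem_AP_hatP.1 h with ⟨s, hs, ⟨hok, rfl⟩ | ⟨hok, rfl⟩⟩ <;> exact ⟨rfl, rfl⟩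

lemma hatP_AP_hatP (P : SProgram α n) : hatP (AP (hatP P)) = AP (hatP P) := by
  ext r
  constructor
  · rintro (⟨hr, -⟩ | ⟨t, ⟨ht, hok⟩, rfl⟩)
    · exact hr
    · exact absurd (AP_hatP_shape ht).1 (by simp [hok])
  · intro hr
    exact Or.inl ⟨hr, (AP_hatP_shape hr).1⟩

lemma AP_AP_hatP (P : SProgram α n) : AP (AP (hatP P)) = AP (hatP P) := by
  ext r
  constructor
  · rintro ⟨s, hs, rfl⟩
    have := (AP_hatP_shape hs)
    cases s; simp_all [AP]
  · intro hr
    exact ⟨r, hr, by have h2 := (AP_hatP_shape hr).2; cases r; simp_all⟩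
end Aux
section Aux2
open SOLP

variable {α : Type} {n : ℕ}

lemma SVar_AP_eq (P : SProgram α n) : SVar (AP P) = SVar (AP (hatP P)) := by
  ext a
  constructor
  · rintro ⟨r, ⟨s, hs, rfl⟩, hcase⟩
    rcases hcase with h | ⟨b, hb, hba⟩ | ⟨p, hp, -⟩
    · cases hok : s.isOkay
      · exact ⟨_, mem_AP_hatP.2 ⟨s, hs, Or.inl ⟨hok, rfl⟩⟩, Or.inl h⟩
      · exact ⟨_, mem_AP_hatP.2 ⟨s, hs, Or.inr ⟨hok, rfl⟩⟩, Or.inl h⟩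
    · cases hok : s.isOkay
      · exact ⟨_, mem_AP_hatP.2 ⟨s, hs, Or.inl ⟨hok, rfl⟩⟩, Or.inr (Or.inl ⟨b, hb, hba⟩)⟩
      · exact ⟨_, mem_AP_hatP.2 ⟨s, hs, Or.inr ⟨hok, rfl⟩⟩,
          Or.inr (Or.inl ⟨b, List.mem_cons_of_mem _ hb, hba⟩)⟩
    · simp at hp
  · intro ha
    obtain ⟨r, hr, hcase⟩ := ha
    rcases mem_AP_hatP.1 hr with ⟨s, hs, ⟨hok, rfl⟩ | ⟨hok, rfl⟩⟩
    · rcases hcase with h | ⟨b, hb, hba⟩ | ⟨p, hp, -⟩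
      · exact ⟨_, ⟨s, hs, rfl⟩, Or.inl h⟩
      · exact ⟨_, ⟨s, hs, rfl⟩, Or.inr (Or.inl ⟨b, hb, hba⟩)⟩
      · simp at hp
    · rcases hcase with h | ⟨b, hb, hba⟩ | ⟨p, hp, -⟩
      · exact ⟨_, ⟨s, hs, rfl⟩, Or.inl h⟩
      · rcases List.mem_cons.1 hb with rfl | hb
        · exact ⟨_, ⟨s, hs, rfl⟩, Or.inl hba⟩
        · exact ⟨_, ⟨s, hs, rfl⟩, Or.inr (Or.inl ⟨b, hb, hba⟩)⟩
      · simp at hp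

lemma ATP_eq_TQ (P : SProgram α n) (I : Set α) :
    ATP P I = {a | ∃ r ∈ AP (hatP P), r.head = a ∧ litsTrue I r.lits} := by
  ext a
  constructor
  · rintro (⟨r, ⟨s, hs, rfl⟩, hok, rfl, hlit⟩ | ⟨r, ⟨s, hs, rfl⟩, hok, rfl, haI, hlit⟩)
    · exact ⟨_, mem_AP_hatP.2 ⟨s, hs, Or.inl ⟨hok, rfl⟩⟩, rfl, hlit⟩
    · refine ⟨_, mem_AP_hatP.2 ⟨s, hs, Or.inr ⟨hok, rfl⟩⟩, rfl, ?_⟩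
      intro b hb
      rcases List.mem_cons.1 hb with rfl | hb
      · exact haI
      · exact hlit b hb
  · rintro ⟨r, hr, rfl, hlit⟩
    rcases mem_AP_hatP.1 hr with ⟨s, hs, ⟨hok, rfl⟩ | ⟨hok, rfl⟩⟩
    · exact Or.inl ⟨_, ⟨s, hs, rfl⟩, hok, rfl, hlit⟩
    · refine Or.inr ⟨_, ⟨s, hs, rfl⟩, hok, rfl, hlit _ List.mem_cons_self, ?_⟩
      intro b hb
      exact hlit b (List.mem_cons_of_mem _ hb)

lemma leastModel_closed {γ : Type} (Pr : NProgram γ) :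
    ∀ r ∈ Pr, (∀ a, Lit.pos a ∈ r.body → a ∈ LeastModel Pr) → r.head ∈ LeastModel Pr := by
  intro r hr hb I hI
  exact hI r hr fun a ha => hb a ha I hI

lemma leastModel_le {γ : Type} {Pr : NProgram γ} {I : Set γ}
    (hI : ∀ r ∈ Pr, (∀ a, Lit.pos a ∈ r.body → a ∈ I) → r.head ∈ I) :
    LeastModel Pr ⊆ I :=
  Set.sInter_subset_of_mem hI

lemma leastModel_elim {γ : Type} {Pr : NProgram γ} {x : γ} (hx : x ∈ LeastModel Pr)
    (S : Set γ)
    (hS : ∀ r ∈ Pr, (∀ a, Lit.pos a ∈ r.body → a ∈ LeastModel Pr ∩ S) → r.head ∈ S) :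
    x ∈ S := by
  have h : LeastModel Pr ⊆ LeastModel Pr ∩ S := by
    apply leastModel_le
    intro r hr hb
    exact ⟨leastModel_closed Pr r hr fun a ha => (hb a ha).1, hS r hr hb⟩
  exact (h hx).2

lemma pos_mem_filterMap {γ : Type} {L : List (Lit γ)} {x : γ} :
    Lit.pos x ∈ L.filterMap Lit.posOnly ↔ Lit.pos x ∈ L := by
  rw [List.mem_filterMap]
  constructor
  · rintro ⟨b, hb, he⟩
    cases b <;> simp [Lit.posOnly] at he
    subst he; exact hb
  · intro h; exact ⟨_, h, rfl⟩

lemma pos_mem_map_atm {L : List (Lit α)} {x : GAtom α n} :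
    Lit.pos x ∈ L.map (Lit.map GAtom.atm) ↔ ∃ a, x = GAtom.atm a ∧ Lit.pos a ∈ L := by
  rw [List.mem_map]
  constructor
  · rintro ⟨b, hb, he⟩
    cases b <;> simp [Lit.map] at he
    exact ⟨_, he.symm, hb⟩
  · rintro ⟨a, rfl, ha⟩
    exact ⟨_, ha, rfl⟩

lemma neg_mem_map_atm {L : List (Lit α)} {x : GAtom α n} :
    Lit.neg x ∈ L.map (Lit.map GAtom.atm) ↔ ∃ a, x = GAtom.atm a ∧ Lit.neg a ∈ L := by
  rw [List.mem_map]
  constructor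
  · rintro ⟨b, hb, he⟩
    cases b <;> simp [Lit.map] at he
    exact ⟨_, he.symm, hb⟩
  · rintro ⟨a, rfl, ha⟩
    exact ⟨_, ha, rfl⟩

lemma mem_Gamma'Q {P : SProgram α n} {r : NRule (GAtom α n)} :
    r ∈ Gamma' (AP (hatP P)) ↔
      (∃ a ∈ SVar (AP (hatP P)),
        r = ⟨GAtom.atm a, [Lit.neg (GAtom.prim a)]⟩ ∨
        r = ⟨GAtom.prim a, [Lit.neg (GAtom.atm a)]⟩) ∨
      (∃ r' ∈ AP (hatP P), r = ⟨GAtom.sup r'.head, r'.lits.map (Lit.map GAtom.atm)⟩) ∨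
      (∃ a ∈ SVar (AP (hatP P)),
        r = ⟨GAtom.fail, [Lit.neg GAtom.fail, Lit.pos (GAtom.sup a), Lit.neg (GAtom.atm a)]⟩ ∨
        r = ⟨GAtom.fail, [Lit.neg GAtom.fail, Lit.pos (GAtom.atm a), Lit.neg (GAtom.sup a)]⟩) := by
  have hV : SVar (AP (hatP (AP (hatP P)))) = SVar (AP (hatP P)) := by
    rw [hatP_AP_hatP, AP_AP_hatP]
  have hbody : ∀ r' ∈ AP (hatP P),
      SRule.transBody r' = r'.lits.map (Lit.map GAtom.atm) := by
    intro r' hr'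
    unfold SRule.transBody
    rw [(AP_hatP_shape hr').2]
    simp
  constructor
  · rintro ((h | h) | h)
    · rw [GammaS1, Set.mem_setOf_eq, hV] at h
      exact Or.inl h
    · obtain ⟨r', hr', rfl⟩ := h
      exact Or.inr (Or.inl ⟨r', hr', by rw [hbody r' hr']⟩)
    · rw [GammaS3, Set.mem_setOf_eq, hV] at h
      exact Or.inr (Or.inr h)
  · rintro (h | ⟨r', hr', rfl⟩ | h)
    · exact Or.inl (Or.inl (by rw [GammaS1, Set.mem_setOf_eq, hV]; exact h))
    · exact Or.inl (Or.inr ⟨r', hr', by rw [hbody r' hr']⟩)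
    · exact Or.inr (by rw [GammaS3, Set.mem_setOf_eq, hV]; exact h)

end Aux2
section Aux3
open SOLP

variable {α : Type} {n : ℕ}

lemma atm_mem_encode {P : SProgram α n} {F : Set α} {a : α} :
    GAtom.atm a ∈ encode P F ↔ a ∈ F := by
  simp [encode]

lemma prim_mem_encode {P : SProgram α n} {F : Set α} {a : α} :
    GAtom.prim a ∈ encode P F ↔ a ∈ SVar (AP (hatP P)) ∧ a ∉ F := by
  simp [encode]

lemma sup_mem_encode {P : SProgram α n} {F : Set α} {a : α} :
    GAtom.sup a ∈ encode P F ↔ a ∈ F := by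
  simp [encode]

lemma fail_not_mem_encode {P : SProgram α n} {F : Set α} :
    (GAtom.fail : GAtom α n) ∉ encode P F := by
  simp [encode]

lemma stable_of_fix {P : SProgram α n} {F : Set α}
    (hF1 : F ⊆ SVar (AP P)) (hF2 : ATP P F = F) :
    encode P F ∈ SMN (Gamma' (AP (hatP P))) := by
  set V := SVar (AP (hatP P)) with hVdef
  set M := encode P F with hMdef
  have hFV : F ⊆ V := by show F ⊆ SVar (AP (hatP P)); rw [← SVar_AP_eq]; exact hF1
  have hfix : {a | ∃ r ∈ AP (hatP P), r.head = a ∧ litsTrue F r.lits} = F := by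
    rw [← ATP_eq_TQ]; exact hF2
  set Red := GLReduct (Gamma' (AP (hatP P))) M with hRed
  show M = LeastModel Red
  -- claim: atm a ∈ LeastModel for a ∈ F
  have claim_atm : ∀ a ∈ F, GAtom.atm a ∈ LeastModel Red := by
    intro a ha
    have hrule : (⟨GAtom.atm a, []⟩ : NRule (GAtom α n)) ∈ Red := by
      refine ⟨⟨GAtom.atm a, [Lit.neg (GAtom.prim a)]⟩,
        mem_Gamma'Q.2 (Or.inl ⟨a, hFV ha, Or.inl rfl⟩), ?_, ?_⟩
      · intro c hc
        simp only [List.mem_singleton, Lit.neg.injEq] at hc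
        subst hc
        rw [prim_mem_encode]
        exact fun h => h.2 ha
      · simp [Lit.posOnly]
    have := leastModel_closed Red _ hrule
    simp only at this
    exact this (by intro x hx; simp at hx)
  have claim_prim : ∀ a, a ∈ V → a ∉ F → GAtom.prim a ∈ LeastModel Red := by
    intro a haV haF
    have hrule : (⟨GAtom.prim a, []⟩ : NRule (GAtom α n)) ∈ Red := by
      refine ⟨⟨GAtom.prim a, [Lit.neg (GAtom.atm a)]⟩,
        mem_Gamma'Q.2 (Or.inl ⟨a, haV, Or.inr rfl⟩), ?_, ?_⟩
      · intro c hc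
        simp only [List.mem_singleton, Lit.neg.injEq] at hc
        subst hc
        rw [atm_mem_encode]
        exact haF
      · simp [Lit.posOnly]
    exact leastModel_closed Red _ hrule (by intro x hx; simp at hx)
  have claim_sup : ∀ a ∈ F, GAtom.sup a ∈ LeastModel Red := by
    intro a ha
    rw [← hfix] at ha
    obtain ⟨r, hr, hhead, hlits⟩ := ha
    have hrule : (⟨GAtom.sup r.head,
        (r.lits.map (Lit.map GAtom.atm)).filterMap Lit.posOnly⟩ : NRule (GAtom α n)) ∈ Red := by
      refine ⟨⟨GAtom.sup r.head, r.lits.map (Lit.map GAtom.atm)⟩,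
        mem_Gamma'Q.2 (Or.inr (Or.inl ⟨r, hr, rfl⟩)), ?_, rfl⟩
      intro c hc
      obtain ⟨b, rfl, hb⟩ := neg_mem_map_atm.1 hc
      rw [atm_mem_encode]
      exact hlits _ hb
    have := leastModel_closed Red _ hrule ?_
    · simpa [hhead] using this
    · intro x hx
      obtain ⟨b, rfl, hb⟩ := pos_mem_map_atm.1 (pos_mem_filterMap.1 hx)
      exact claim_atm b (hlits _ hb)
  apply Set.Subset.antisymm
  · rintro x (⟨⟨a, ha, rfl⟩ | ⟨a, ha, rfl⟩⟩ | ⟨a, ha, rfl⟩)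
    · exact claim_atm a ha
    · exact claim_prim a ha.1 ha.2
    · exact claim_sup a ha
  · apply leastModel_le
    rintro r ⟨r', hr', hneg, rfl⟩ hbody
    rcases mem_Gamma'Q.1 hr' with ⟨a, haV, rfl | rfl⟩ | ⟨r'', hr'', rfl⟩ |
        ⟨a, haV, rfl | rfl⟩
    · -- atm a ← not prim a
      have hp : GAtom.prim a ∉ M := hneg _ (by simp)
      have haF : a ∈ F := by
        by_contra haF
        exact hp (prim_mem_encode.2 ⟨haV, haF⟩)
      exact atm_mem_encode.2 haF
    · -- prim a ← not atm a
      have hp : GAtom.atm a ∉ M := hneg _ (by simp)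
      have haF : a ∉ F := fun h => hp (atm_mem_encode.2 h)
      exact prim_mem_encode.2 ⟨haV, haF⟩
    · -- sup rule
      have hhead : r''.head ∈ F := by
        rw [← hfix]
        refine ⟨r'', hr'', rfl, ?_⟩
        intro b hb
        cases b with
        | pos b =>
            have := hbody (GAtom.atm b)
              (pos_mem_filterMap.2 (pos_mem_map_atm.2 ⟨b, rfl, hb⟩))
            exact atm_mem_encode.1 this
        | neg b =>
            have := hneg (GAtom.atm b) (neg_mem_map_atm.2 ⟨b, rfl, hb⟩)
            exact fun h => this (atm_mem_encode.2 h)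
      exact sup_mem_encode.2 hhead
    · -- fail rule 1
      exfalso
      have h1 : GAtom.atm a ∉ M := hneg _ (by simp)
      have h2 : GAtom.sup a ∈ M := hbody _ (pos_mem_filterMap.2 (by simp))
      exact h1 (atm_mem_encode.2 (sup_mem_encode.1 h2))
    · -- fail rule 2
      exfalso
      have h1 : GAtom.sup a ∉ M := hneg _ (by simp)
      have h2 : GAtom.atm a ∈ M := hbody _ (pos_mem_filterMap.2 (by simp))
      exact h1 (sup_mem_encode.2 (atm_mem_encode.1 h2))

end Aux3
section Aux4
open SOLP

variable {α : Type} {n : ℕ}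

lemma fix_of_stable {P : SProgram α n} {M : Set (GAtom α n)}
    (hM : M = LeastModel (GLReduct (Gamma' (AP (hatP P))) M)) :
    ∃ F : Set α, (F ⊆ SVar (AP P) ∧ ATP P F = F) ∧ M = encode P F := by
  set Red := GLReduct (Gamma' (AP (hatP P))) M with hRedDef
  have Mclosed : ∀ r ∈ Red, (∀ a, Lit.pos a ∈ r.body → a ∈ M) → r.head ∈ M := by
    intro r hr hb
    rw [hM]
    exact leastModel_closed Red r hr fun a ha => hM ▸ hb a ha
  have helim : ∀ x ∈ M, ∀ S : Set (GAtom α n),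
      (∀ r ∈ Red, (∀ a, Lit.pos a ∈ r.body → a ∈ M ∩ S) → r.head ∈ S) → x ∈ S := by
    intro x hx S hS
    rw [hM] at hx
    exact leastModel_elim hx S fun r hr hb =>
      hS r hr fun a ha => by rw [hM]; exact hb a ha
  -- fail is not in M
  have hfail : (GAtom.fail : GAtom α n) ∉ M := by
    intro hf
    have : (GAtom.fail : GAtom α n) ∈ {y : GAtom α n | y ≠ GAtom.fail} := by
      refine helim _ hf _ ?_
      rintro r ⟨r', hr', hneg, rfl⟩ -
      rcases mem_Gamma'Q.1 hr' with ⟨a, haV, rfl | rfl⟩ | ⟨r'', hr'', rfl⟩ |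
          ⟨a, haV, rfl | rfl⟩
      · simp
      · simp
      · simp
      · exact absurd hf (hneg GAtom.fail List.mem_cons_self)
      · exact absurd hf (hneg GAtom.fail List.mem_cons_self)
    exact this rfl
  -- shape of elements of M
  have hshape : ∀ x ∈ M, (∃ a ∈ SVar (AP (hatP P)), x = GAtom.atm a) ∨
      (∃ a ∈ SVar (AP (hatP P)), x = GAtom.prim a) ∨
      (∃ a ∈ SVar (AP (hatP P)), x = GAtom.sup a) ∨ x = GAtom.fail := by
    intro x hx
    refine helim _ hx {y | (∃ a ∈ SVar (AP (hatP P)), y = GAtom.atm a) ∨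
      (∃ a ∈ SVar (AP (hatP P)), y = GAtom.prim a) ∨
      (∃ a ∈ SVar (AP (hatP P)), y = GAtom.sup a) ∨ y = GAtom.fail} ?_
    rintro r ⟨r', hr', hneg, rfl⟩ -
    rcases mem_Gamma'Q.1 hr' with ⟨a, haV, rfl | rfl⟩ | ⟨r'', hr'', rfl⟩ |
        ⟨a, haV, rfl | rfl⟩
    · exact Or.inl ⟨a, haV, rfl⟩
    · exact Or.inr (Or.inl ⟨a, haV, rfl⟩)
    · exact Or.inr (Or.inr (Or.inl ⟨r''.head, ⟨r'', hr'', Or.inl rfl⟩, rfl⟩))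
    · exact Or.inr (Or.inr (Or.inr rfl))
    · exact Or.inr (Or.inr (Or.inr rfl))
  -- prim a ∈ M → atm a ∉ M
  have hPA : ∀ a : α, GAtom.prim a ∈ M → GAtom.atm a ∉ M := by
    intro a hp ha
    have : (GAtom.prim a : GAtom α n) ∈ {y : GAtom α n | y ≠ GAtom.prim a} := by
      refine helim _ hp _ ?_
      rintro r ⟨r', hr', hneg, rfl⟩ -
      rcases mem_Gamma'Q.1 hr' with ⟨b, hbV, rfl | rfl⟩ | ⟨r'', hr'', rfl⟩ |
          ⟨b, hbV, rfl | rfl⟩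
      · simp
      · have hba : b ≠ a := by
          rintro rfl
          exact hneg (GAtom.atm b) (by simp) ha
        simp [hba]
      · simp
      · simp
      · simp
    exact this rfl
  -- a ∈ V and atm a ∉ M → prim a ∈ M
  have hVA : ∀ a ∈ SVar (AP (hatP P)), GAtom.atm a ∉ M → GAtom.prim a ∈ M := by
    intro a haV ha
    have hrule : (⟨GAtom.prim a, []⟩ : NRule (GAtom α n)) ∈ Red := by
      refine ⟨⟨GAtom.prim a, [Lit.neg (GAtom.atm a)]⟩,
        mem_Gamma'Q.2 (Or.inl ⟨a, haV, Or.inr rfl⟩), ?_, by simp [Lit.posOnly]⟩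
      intro c hc
      simp only [List.mem_singleton, Lit.neg.injEq] at hc
      subst hc; exact ha
    exact Mclosed _ hrule (by intro x hx; simp at hx)
  -- sup a ∈ M → atm a ∈ M
  have hSA : ∀ a : α, GAtom.sup a ∈ M → GAtom.atm a ∈ M := by
    intro a hs
    by_contra ha
    have haV : a ∈ SVar (AP (hatP P)) := by
      rcases hshape _ hs with ⟨b, hbV, hb⟩ | ⟨b, hbV, hb⟩ | ⟨b, hbV, hb⟩ | hb
      · exact absurd hb (by simp)
      · exact absurd hb (by simp)
      · rw [GAtom.sup.injEq] at hb; subst hb; exact hbV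
      · exact absurd hb (by simp)
    have hrule : (⟨GAtom.fail, [Lit.pos (GAtom.sup a)]⟩ : NRule (GAtom α n)) ∈ Red := by
      refine ⟨⟨GAtom.fail, [Lit.neg GAtom.fail, Lit.pos (GAtom.sup a),
          Lit.neg (GAtom.atm a)]⟩,
        mem_Gamma'Q.2 (Or.inr (Or.inr ⟨a, haV, Or.inl rfl⟩)), ?_, rfl⟩
      intro c hc
      simp only [List.mem_cons, List.not_mem_nil, or_false] at hc
      rcases hc with h | h | h
      · injection h with h1; subst h1; exact hfail
      · exact absurd h (by simp)
      · injection h with h1; subst h1; exact ha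
    exact hfail (Mclosed _ hrule (by rintro x hx; simp at hx; subst hx; exact hs))
  -- atm a ∈ M → sup a ∈ M
  have hAS : ∀ a : α, GAtom.atm a ∈ M → GAtom.sup a ∈ M := by
    intro a hs
    by_contra ha
    have haV : a ∈ SVar (AP (hatP P)) := by
      rcases hshape _ hs with ⟨b, hbV, hb⟩ | ⟨b, hbV, hb⟩ | ⟨b, hbV, hb⟩ | hb
      · rw [GAtom.atm.injEq] at hb; subst hb; exact hbV
      · exact absurd hb (by simp)
      · exact absurd hb (by simp)
      · exact absurd hb (by simp)
    have hrule : (⟨GAtom.fail, [Lit.pos (GAtom.atm a)]⟩ : NRule (GAtom α n)) ∈ Red := by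
      refine ⟨⟨GAtom.fail, [Lit.neg GAtom.fail, Lit.pos (GAtom.atm a),
          Lit.neg (GAtom.sup a)]⟩,
        mem_Gamma'Q.2 (Or.inr (Or.inr ⟨a, haV, Or.inr rfl⟩)), ?_, rfl⟩
      intro c hc
      simp only [List.mem_cons, List.not_mem_nil, or_false] at hc
      rcases hc with h | h | h
      · injection h with h1; subst h1; exact hfail
      · exact absurd h (by simp)
      · injection h with h1; subst h1; exact ha
    exact hfail (Mclosed _ hrule (by rintro x hx; simp at hx; subst hx; exact hs))
  refine ⟨{a | GAtom.atm a ∈ M}, ⟨?_, ?_⟩, ?_⟩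
  · -- F ⊆ SVar (AP P)
    intro a ha
    rw [SVar_AP_eq]
    rcases hshape _ ha with ⟨b, hbV, hb⟩ | ⟨b, hbV, hb⟩ | ⟨b, hbV, hb⟩ | hb
    · rw [GAtom.atm.injEq] at hb; subst hb; exact hbV
    · exact absurd hb (by simp)
    · exact absurd hb (by simp)
    · exact absurd hb (by simp)
  · -- fixpoint
    rw [ATP_eq_TQ]
    apply Set.Subset.antisymm
    · rintro a ⟨r, hr, rfl, hlits⟩
      have hrule : (⟨GAtom.sup r.head,
          (r.lits.map (Lit.map GAtom.atm)).filterMap Lit.posOnly⟩ :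
            NRule (GAtom α n)) ∈ Red := by
        refine ⟨⟨GAtom.sup r.head, r.lits.map (Lit.map GAtom.atm)⟩,
          mem_Gamma'Q.2 (Or.inr (Or.inl ⟨r, hr, rfl⟩)), ?_, rfl⟩
        intro c hc
        obtain ⟨b, rfl, hb⟩ := neg_mem_map_atm.1 hc
        exact hlits _ hb
      have hsup : GAtom.sup r.head ∈ M := by
        refine Mclosed _ hrule ?_
        intro x hx
        obtain ⟨b, rfl, hb⟩ := pos_mem_map_atm.1 (pos_mem_filterMap.1 hx)
        exact hlits _ hb
      exact hSA _ hsup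
    · intro a ha
      have hs : GAtom.sup a ∈ M := hAS a ha
      have : (GAtom.sup a : GAtom α n) ∈ {y : GAtom α n | ∀ b, y = GAtom.sup b →
          b ∈ {c | ∃ r ∈ AP (hatP P), r.head = c ∧ litsTrue {d | GAtom.atm d ∈ M} r.lits}} := by
        refine helim _ hs _ ?_
        rintro r ⟨r', hr', hneg, rfl⟩ hb
        rcases mem_Gamma'Q.1 hr' with ⟨c, hcV, rfl | rfl⟩ | ⟨r'', hr'', rfl⟩ |
            ⟨c, hcV, rfl | rfl⟩
        · intro b heq; simp at heq
        · intro b heq; simp at heq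
        · rintro b heq
          rw [GAtom.sup.injEq] at heq
          subst heq
          refine ⟨r'', hr'', rfl, ?_⟩
          intro c hc
          cases c with
          | pos c =>
              exact (hb (GAtom.atm c)
                (pos_mem_filterMap.2 (pos_mem_map_atm.2 ⟨c, rfl, hc⟩))).1
          | neg c =>
              exact fun h => hneg (GAtom.atm c) (neg_mem_map_atm.2 ⟨c, rfl, hc⟩) h
        · intro b heq; simp at heq
        · intro b heq; simp at heq
      exact this a rfl
  · -- M = encode P F
    ext x
    constructor
    · intro hx
      rcases hshape _ hx with ⟨a, haV, rfl⟩ | ⟨a, haV, rfl⟩ | ⟨a, haV, rfl⟩ | rfl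
      · exact Or.inl (Or.inl ⟨a, hx, rfl⟩)
      · exact Or.inl (Or.inr ⟨a, ⟨haV, hPA a hx⟩, rfl⟩)
      · exact Or.inr ⟨a, hSA a hx, rfl⟩
      · exact absurd hx hfail
    · rintro (⟨⟨a, ha, rfl⟩ | ⟨a, ha, rfl⟩⟩ | ⟨a, ha, rfl⟩)
      · exact ha
      · exact hVA a ha.1 ha.2
      · exact hAS a ha
end Aux4

open SOLP in
/-- `SM(Γ'(A(P̂))) = ∪_{F ∈ AFP(P)} {[F]_P}`. -/
theorem sm_gamma'_a_hat_eq_afp_encodings {α : Type} {n : ℕ} (P : SProgram α n) :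
    SMN (Gamma' (AP (hatP P))) = ⋃ F ∈ AFP P, {encode P F} := by
  ext M
  simp only [Set.mem_iUnion, Set.mem_singleton_iff]
  constructor
  · intro hM
    obtain ⟨F, hF, rfl⟩ := fix_of_stable (P := P) hM
    exact ⟨F, hF, rfl⟩
  · rintro ⟨F, hF, rfl⟩
    exact stable_of_fix hF.1 hF.2
end

section
/- For any COLP program P and every integer n ≥ 1, FP(P̂) = AFP(σ^n(P)): the classical fixpoints of the traditional program obtained from P by rewriting okay-rules coincide with the autonomous fixpoints of the SOLP translation σ^n(P), independently of n. -/
namespace SOLP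

/-- Membership in `AP (sigmaP n P)`. -/
lemma mem_AP_sigmaP {α : Type} {n : ℕ} (P : CProgram α) (r : SRule α n) :
    r ∈ AP (sigmaP n P) ↔ ∃ c ∈ P, r = ⟨c.head, c.isOkay, c.lits, []⟩ := by
  constructor
  · rintro ⟨r', ⟨c, hc, rfl⟩, rfl⟩
    exact ⟨c, hc, rfl⟩
  · rintro ⟨c, hc, rfl⟩
    exact ⟨sigmaRule n c, ⟨c, hc, rfl⟩, rfl⟩

lemma var_eq {α : Type} (P : CProgram α) (n : ℕ) :
    SVar (AP (sigmaP n P)) = NVar (hatC P) := by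
  ext a
  constructor
  · rintro ⟨r, hr, h⟩
    rw [mem_AP_sigmaP] at hr
    obtain ⟨c, hc, rfl⟩ := hr
    refine ⟨c.hatN, ⟨c, hc, rfl⟩, ?_⟩
    simp only at h
    rcases h with h | ⟨b, hb, hba⟩ | ⟨p, hp, _⟩
    · unfold CRule.hatN
      split <;> exact Or.inl h
    · unfold CRule.hatN
      split
      · exact Or.inr ⟨b, List.mem_cons_of_mem _ hb, hba⟩
      · exact Or.inr ⟨b, hb, hba⟩
    · simp at hp
  · rintro ⟨r, ⟨c, hc, rfl⟩, h⟩
    refine ⟨⟨c.head, c.isOkay, c.lits, []⟩, (mem_AP_sigmaP P _).2 ⟨c, hc, rfl⟩, ?_⟩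
    simp only
    unfold CRule.hatN at h
    split at h
    · rcases h with h | ⟨b, hb, hba⟩
      · exact Or.inl h
      · rcases List.mem_cons.1 hb with rfl | hb
        · exact Or.inl hba
        · exact Or.inr (Or.inl ⟨b, hb, hba⟩)
    · rcases h with h | ⟨b, hb, hba⟩
      · exact Or.inl h
      · exact Or.inr (Or.inl ⟨b, hb, hba⟩)

lemma T_eq {α : Type} (P : CProgram α) (n : ℕ) (I : Set α) :
    ATP (sigmaP n P) I = TN (hatC P) I := by
  ext a
  constructor
  · rintro (⟨r, hr, hok, rfl, hlits⟩ | ⟨r, hr, hok, rfl, haI, hlits⟩) <;>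
      rw [mem_AP_sigmaP] at hr <;> obtain ⟨c, hc, rfl⟩ := hr
    · refine ⟨c.hatN, ⟨c, hc, rfl⟩, ?_, ?_⟩ <;>
        simp_all [CRule.hatN, litsTrue]
    · refine ⟨c.hatN, ⟨c, hc, rfl⟩, ?_, ?_⟩
      · simp_all [CRule.hatN]
      · simp only at hok
        simp only [CRule.hatN, hok, if_pos]
        intro b hb
        rcases List.mem_cons.1 hb with rfl | hb
        · exact haI
        · exact hlits b hb
  · rintro ⟨r, ⟨c, hc, rfl⟩, hh, hb⟩
    by_cases hok : c.isOkay
    · right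
      refine ⟨⟨c.head, c.isOkay, c.lits, []⟩, (mem_AP_sigmaP P _).2 ⟨c, hc, rfl⟩, hok, ?_, ?_, ?_⟩
      · simp only [CRule.hatN, hok, if_pos] at hh; exact hh
      · simp only [CRule.hatN, hok, if_pos] at hb hh
        subst hh
        exact hb _ List.mem_cons_self
      · simp only [CRule.hatN, hok, if_pos] at hb
        exact fun b hbm => hb b (List.mem_cons_of_mem _ hbm)
    · left
      refine ⟨⟨c.head, c.isOkay, c.lits, []⟩, (mem_AP_sigmaP P _).2 ⟨c, hc, rfl⟩,
        Bool.eq_false_iff.2 hok, ?_, ?_⟩ <;>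
        simp_all [CRule.hatN, litsTrue]

end SOLP

open SOLP in
/-- for every COLP program `P` and every `n ≥ 1`, `FP(P̂) = AFP(σ^n(P))`. -/
theorem fp_hat_eq_afp_sigma {α : Type} (P : CProgram α) (n : ℕ) (hn : 1 ≤ n) :
    NFP (hatC P) = AFP (sigmaP n P) := by
  ext I
  simp only [NFP, AFP, Set.mem_setOf_eq, var_eq P n, T_eq P n I]
end

section
/- The Social Semantics extends the Joint Fixpoint Semantics: for COLP programs P_1,...,P_n (n ≥ 1) and the SOLP collection {Q_1,...,Q_n} with Q_i = σ^n(P_i), SOS(Q_1,...,Q_n) = { ∪_{1≤i≤n} (F)_{Q_i} : F ∈ JFP(P_1,...,P_n) }. -/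
namespace SOLP

lemma mem_iUnion_labelled {α : Type} {n : ℕ} (F : Fin n → Set α) (j : Fin n) (a : α) :
    (j, a) ∈ ⋃ i, labelled i (F i) ↔ a ∈ F j := by
  simp only [Set.mem_iUnion, labelled, Set.mem_setOf_eq]
  constructor
  · rintro ⟨i, rfl, h⟩; exact h
  · intro h; exact ⟨j, rfl, h⟩

lemma lit_trueFor_iff {α : Type} {n : ℕ} (F : Fin n → Set α) (j : Fin n) (b : Lit α) :
    Lit.trueFor (⋃ i, labelled i (F i)) j b ↔ b.holds (F j) := by
  cases b with
  | pos a => exact mem_iUnion_labelled F j a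
  | neg a => exact not_congr (mem_iUnion_labelled F j a)

lemma sc_trueFor_iff {α : Type} {n : ℕ} (F : Fin n → Set α) (j : Fin n) (a : α) :
    SC.TrueFor (⋃ i, labelled i (F i)) j
      (SC.mk (.card (n - 1) (n - 1)) [Lit.pos a] []) ↔
      ∀ p, p ≠ j → a ∈ F p := by
  have hcard : (Finset.univ.erase j).card = n - 1 := by
    simp [Finset.card_erase_of_mem, Finset.card_univ]
  constructor
  · intro h
    cases h with
    | card D hD hl hh hc D' hsub hs =>
      intro p hp
      have hDsub : D ⊆ Finset.univ.erase j := fun q hq =>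
        Finset.mem_erase.2 ⟨(hD q hq).2, Finset.mem_univ q⟩
      have hDeq : D = Finset.univ.erase j :=
        Finset.eq_of_subset_of_card_le hDsub (by rw [hcard]; exact hl)
      have hpD : p ∈ D := by rw [hDeq]; exact Finset.mem_erase.2 ⟨hp, Finset.mem_univ p⟩
      have := hc (Lit.pos a) (by simp) p hpD
      exact (mem_iUnion_labelled F p a).1 this
  · intro h
    refine SC.TrueIn.card (Finset.univ.erase j)
      (fun p hp => ⟨Set.mem_univ p, (Finset.mem_erase.1 hp).1⟩)
      (le_of_eq hcard.symm) (le_of_eq hcard) ?_ (fun s' _ => ∅)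
      (fun s' hs' => absurd hs' List.not_mem_nil)
      (fun s' hs' => absurd hs' List.not_mem_nil)
    rintro b hb p hp
    have hb' : b = Lit.pos a := by simpa using hb
    subst hb'
    exact (mem_iUnion_labelled F p a).2 (h p (Finset.mem_erase.1 hp).1)

lemma litsTrueFor_iff {α : Type} {n : ℕ} (F : Fin n → Set α) (j : Fin n) (L : List (Lit α)) :
    (∀ b ∈ L, Lit.trueFor (⋃ i, labelled i (F i)) j b) ↔ litsTrue (F j) L := by
  unfold litsTrue
  exact forall₂_congr fun b _ => lit_trueFor_iff F j b

lemma bodyTrue_sigma_iff {α : Type} {n : ℕ} (F : Fin n → Set α) (j : Fin n) (c : CRule α) :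
    SRule.bodyTrue (⋃ i, labelled i (F i)) j (sigmaRule n c) ↔
      litsTrue (F j) c.lits ∧ ∀ p, p ≠ j → c.head ∈ F p := by
  unfold SRule.bodyTrue sigmaRule
  simp only [List.mem_singleton]
  constructor
  · rintro ⟨h1, h2⟩
    refine ⟨(litsTrueFor_iff F j c.lits).1 h1, ?_⟩
    have := (h2 _ rfl).1 rfl
    exact (sc_trueFor_iff F j c.head).1 this
  · rintro ⟨h1, h2⟩
    refine ⟨(litsTrueFor_iff F j c.lits).2 h1, ?_⟩
    rintro p rfl
    exact ⟨fun _ => (sc_trueFor_iff F j c.head).2 h2, fun h => by simp at h⟩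

lemma mem_svar_sigma {α : Type} {n : ℕ} (P : CProgram α) (a : α) :
    a ∈ SVar (AP (sigmaP n P)) ↔ ∃ c ∈ P, c.head = a ∨ ∃ b ∈ c.lits, Lit.atom b = a := by
  constructor
  · rintro ⟨r, ⟨r', ⟨c, hc, rfl⟩, rfl⟩, h⟩
    refine ⟨c, hc, ?_⟩
    rcases h with h | h | ⟨p, hp, _⟩
    · exact Or.inl h
    · exact Or.inr h
    · exact absurd hp List.not_mem_nil
  · rintro ⟨c, hc, h⟩
    refine ⟨⟨c.head, c.isOkay, c.lits, []⟩, ⟨sigmaRule n c, ⟨c, hc, rfl⟩, rfl⟩, ?_⟩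
    rcases h with h | h
    · exact Or.inl h
    · exact Or.inr (Or.inl h)

lemma mem_nvar_hatC {α : Type} (P : CProgram α) (a : α) :
    a ∈ NVar (hatC P) ↔ ∃ c ∈ P, c.head = a ∨ ∃ b ∈ c.lits, Lit.atom b = a := by
  constructor
  · rintro ⟨r, ⟨c, hc, rfl⟩, h⟩
    refine ⟨c, hc, ?_⟩
    unfold CRule.hatN at h
    cases hok : c.isOkay
    · rw [hok] at h
      simp only [if_neg Bool.false_ne_true] at h
      exact h
    · rw [hok] at h
      simp only [if_pos rfl] at h
      rcases h with h | ⟨b, hb, hba⟩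
      · exact Or.inl h
      · rcases List.mem_cons.1 hb with rfl | hb
        · exact Or.inl hba
        · exact Or.inr ⟨b, hb, hba⟩
  · rintro ⟨c, hc, h⟩
    refine ⟨c.hatN, ⟨c, hc, rfl⟩, ?_⟩
    unfold CRule.hatN
    cases hok : c.isOkay
    · simp only [if_neg Bool.false_ne_true]
      exact h
    · simp only [if_pos rfl]
      rcases h with h | ⟨b, hb, hba⟩
      · exact Or.inl h
      · exact Or.inr ⟨b, List.mem_cons_of_mem _ hb, hba⟩

lemma svar_sigma_eq {α : Type} {n : ℕ} (P : CProgram α) :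
    SVar (AP (sigmaP n P)) = NVar (hatC P) := by
  ext a
  exact (mem_svar_sigma P a).trans (mem_nvar_hatC P a).symm

lemma atp_sigma_eq {α : Type} {n : ℕ} (P : CProgram α) (J : Set α) :
    ATP (sigmaP n P) J = TN (hatC P) J := by
  ext a
  simp only [ATP, TN, AP, sigmaP, hatC, Set.mem_union, Set.mem_setOf_eq, Set.mem_image]
  constructor
  · rintro (⟨r, ⟨r', ⟨c, hc, rfl⟩, rfl⟩, hok, rfl, hlits⟩ |
            ⟨r, ⟨r', ⟨c, hc, rfl⟩, rfl⟩, hok, rfl, haJ, hlits⟩)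
    · refine ⟨c.hatN, ⟨c, hc, rfl⟩, ?_⟩
      unfold sigmaRule at hok hlits ⊢
      simp only at hok hlits
      unfold CRule.hatN
      rw [hok]
      exact ⟨rfl, hlits⟩
    · refine ⟨c.hatN, ⟨c, hc, rfl⟩, ?_⟩
      unfold sigmaRule at hok haJ hlits ⊢
      simp only at hok haJ hlits
      unfold CRule.hatN
      rw [hok]
      refine ⟨rfl, ?_⟩
      intro b hb
      rcases List.mem_cons.1 hb with rfl | hb
      · exact haJ
      · exact hlits b hb
  · rintro ⟨r, ⟨c, hc, rfl⟩, rfl, hbody⟩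
    unfold CRule.hatN at hbody ⊢
    cases hok : c.isOkay
    · rw [hok] at hbody
      simp only [if_neg Bool.false_ne_true] at hbody ⊢
      exact Or.inl ⟨_, ⟨sigmaRule n c, ⟨c, hc, rfl⟩, rfl⟩, by simp [sigmaRule, hok],
        by simp [sigmaRule], fun b hb => hbody b hb⟩
    · rw [hok] at hbody
      simp only [if_pos rfl] at hbody ⊢
      refine Or.inr ⟨_, ⟨sigmaRule n c, ⟨c, hc, rfl⟩, rfl⟩, by simp [sigmaRule, hok],
        by simp [sigmaRule], ?_, ?_⟩
      · exact hbody (Lit.pos c.head) List.mem_cons_self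
      · exact fun b hb => hbody b (List.mem_cons_of_mem _ hb)

lemma afp_sigma_eq {α : Type} {n : ℕ} (P : CProgram α) :
    AFP (sigmaP n P) = NFP (hatC P) := by
  ext I
  simp only [AFP, NFP, Set.mem_setOf_eq, svar_sigma_eq, atp_sigma_eq]

lemma mem_stc_sigma_iff {α : Type} {n : ℕ} (P : Fin n → CProgram α) (I : SInterp α n)
    (j : Fin n) (a : α) :
    (j, a) ∈ STC (fun i => sigmaP n (P i)) I ↔
      ∃ c ∈ P j, c.head = a ∧ SRule.bodyTrue I j (sigmaRule n c) ∧
        (c.isOkay = true → (j, a) ∈ I) := by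
  simp only [STC, Set.mem_union, Set.mem_setOf_eq, sigmaP, Set.mem_image]
  constructor
  · rintro (⟨r, ⟨c, hc, rfl⟩, hok, hhead, hbody⟩ | ⟨r, ⟨c, hc, rfl⟩, hok, hhead, hI, hbody⟩)
    · exact ⟨c, hc, hhead, hbody, fun h => absurd hok (by simp [sigmaRule, h])⟩
    · exact ⟨c, hc, hhead, hbody, fun _ => hI⟩
  · rintro ⟨c, hc, hhead, hbody, hok⟩
    cases h : c.isOkay
    · exact Or.inl ⟨sigmaRule n c, ⟨c, hc, rfl⟩, by simp [sigmaRule, h], hhead, hbody⟩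
    · exact Or.inr ⟨sigmaRule n c, ⟨c, hc, rfl⟩, by simp [sigmaRule, h], hhead,
        hok h, hbody⟩

lemma mem_tn_hatC_iff {α : Type} (P : CProgram α) (J : Set α) (a : α) :
    a ∈ TN (hatC P) J ↔
      ∃ c ∈ P, c.head = a ∧ litsTrue J c.lits ∧ (c.isOkay = true → a ∈ J) := by
  simp only [TN, hatC, Set.mem_setOf_eq, Set.mem_image]
  constructor
  · rintro ⟨r, ⟨c, hc, rfl⟩, hhead, hbody⟩
    unfold CRule.hatN at hhead hbody
    cases h : c.isOkay
    · rw [h] at hhead hbody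
      simp only [if_neg Bool.false_ne_true] at hhead hbody
      exact ⟨c, hc, hhead, hbody, fun hh => absurd (h ▸ hh) (by simp)⟩
    · rw [h] at hhead hbody
      simp only [if_pos rfl] at hhead hbody
      exact ⟨c, hc, hhead, fun b hb => hbody b (List.mem_cons_of_mem _ hb),
        fun _ => hhead ▸ hbody (Lit.pos c.head) List.mem_cons_self⟩
  · rintro ⟨c, hc, hhead, hlits, hok⟩
    refine ⟨c.hatN, ⟨c, hc, rfl⟩, ?_⟩
    unfold CRule.hatN
    cases h : c.isOkay
    · simp only [if_neg Bool.false_ne_true]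
      exact ⟨hhead, hlits⟩
    · simp only [if_pos rfl]
      refine ⟨hhead, ?_⟩
      intro b hb
      rcases List.mem_cons.1 hb with rfl | hb
      · exact hhead ▸ hok h
      · exact hlits b hb

end SOLP

open SOLP in
/-- the Social Semantics extends the Joint Fixpoint Semantics. -/
theorem sos_sigma_eq_jfp {α : Type} (n : ℕ) (hn : 1 ≤ n) (P : Fin n → CProgram α) :
    SOS (fun i => sigmaP n (P i)) =
      {I | ∃ F ∈ JFP P, I = ⋃ i, labelled i F} := by
  ext I
  simp only [SOS, Set.mem_setOf_eq, JFP, Set.mem_iInter]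
  constructor
  · rintro ⟨⟨F, hF, rfl⟩, hfix⟩
    -- all F i are equal
    have key : ∀ j : Fin n, ∀ a ∈ F j, ∀ p : Fin n, a ∈ F p := by
      intro j a ha p
      have hmemI : (j, a) ∈ ⋃ i, labelled i (F i) := (mem_iUnion_labelled F j a).2 ha
      rw [← hfix] at hmemI
      obtain ⟨c, _, hhead, hbody, _⟩ := (mem_stc_sigma_iff P _ j a).1 hmemI
      have hsc := ((bodyTrue_sigma_iff F j c).1 hbody).2
      by_cases hpj : p = j
      · exact hpj ▸ ha
      · exact hhead ▸ hsc p hpj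
    set j0 : Fin n := ⟨0, hn⟩ with hj0
    refine ⟨F j0, ?_, ?_⟩
    · intro i
      have hFi : F i ∈ NFP (hatC (P i)) := (afp_sigma_eq (P i)) ▸ hF i
      have heq : F j0 = F i := by
        ext a
        exact ⟨fun h => key j0 a h i, fun h => key i a h j0⟩
      rw [heq]
      exact hFi
    · have : ∀ i, F i = F j0 := fun i => by
        ext a; exact ⟨fun h => key i a h j0, fun h => key j0 a h i⟩
      exact Set.iUnion_congr fun i => by rw [this i]
  · rintro ⟨F, hF, rfl⟩
    refine ⟨⟨fun _ => F, fun i => (afp_sigma_eq (P i)) ▸ hF i, rfl⟩, ?_⟩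
    have hFfix : ∀ i, TN (hatC (P i)) F = F := fun i => (hF i).2
    ext x
    obtain ⟨j, a⟩ := x
    rw [mem_stc_sigma_iff, mem_iUnion_labelled (fun _ => F) j a]
    constructor
    · rintro ⟨c, hc, hhead, hbody, hok⟩
      have : a ∈ TN (hatC (P j)) F := by
        rw [mem_tn_hatC_iff]
        exact ⟨c, hc, hhead, ((bodyTrue_sigma_iff (fun _ => F) j c).1 hbody).1, hok⟩
      rw [hFfix j] at this
      exact this
    · intro ha
      have : a ∈ TN (hatC (P j)) F := by rw [hFfix j]; exact ha
      obtain ⟨c, hc, hhead, hlits, _⟩ := (mem_tn_hatC_iff (P j) F a).1 this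
      refine ⟨c, hc, hhead, ?_, fun _ => ha⟩
      rw [bodyTrue_sigma_iff]
      exact ⟨hlits, fun p _ => hhead ▸ ha⟩
end
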